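/- Let X be a set, c an outer measure on X, q ≥ 1 an integer, and (u_k)_{k∈ℕ} a sequence of real-valued functions on X such that for every k ∈ ℕ and every real η > 0 one has c({x ∈ X : |u_{k+1}(x) − u_k(x)| ≥ η}) ≤ 2/(η^q · 2^{(q+1)k}). Then for every natural number j ≥ 1 and every real δ > 0, c({x ∈ X : ∃ k ≥ j with u_k(x) − u_j(x) ≥ δ/2}) ≤ 4^{q+1}/(δ^q · 2^j). -/

import Mathlib

open MeasureTheory Filter
open scoped ENNReal

/-- Capacity estimate from the proof of the subsolution theorem (Theorem E):
given the dyadic bounds on consecutive differences, the outer measure of the set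
where some `u k` (`k ≥ j`) exceeds `u j` by `δ/2` is at most `4^(q+1)/(δ^q 2^j)`. -/
theorem stmt1 {X : Type*} (c : OuterMeasure X) (q : ℕ) (hq : 1 ≤ q)
    (u : ℕ → X → ℝ)
    (h : ∀ k : ℕ, ∀ η : ℝ, 0 < η →
      c {x | |u (k + 1) x - u k x| ≥ η} ≤
        2 / (ENNReal.ofReal η ^ q * 2 ^ ((q + 1) * k)))
    (j : ℕ) (hj : 1 ≤ j) (δ : ℝ) (hδ : 0 < δ) :
    c {x | ∃ k, k ≥ j ∧ u k x - u j x ≥ δ / 2} ≤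
      4 ^ (q + 1) / (ENNReal.ofReal δ ^ q * 2 ^ j) := by
  set A : ℕ → Set X := fun n => {x | |u (j + n + 1) x - u (j + n) x| ≥ δ / 2 ^ (n + 2)}
  -- Step 1: inclusion into the union
  have hsub : {x | ∃ k, k ≥ j ∧ u k x - u j x ≥ δ / 2} ⊆ ⋃ n, A n := by
    intro x hx
    rcases hx with ⟨k, hkj, hk⟩
    by_contra hxn
    simp only [Set.mem_iUnion, not_exists, A, Set.mem_setOf_eq, not_le, ge_iff_le] at hxn
    set m := k - j with hm
    have hkm : k = j + m := by omega
    have htel : u k x - u j x = ∑ i ∈ Finset.range m, (u (j + i + 1) x - u (j + i) x) := by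
      rw [hkm]
      exact (Finset.sum_range_sub (fun i => u (j + i) x) m).symm
    have hle : u k x - u j x ≤ ∑ i ∈ Finset.range m, δ / 2 ^ (i + 2) := by
      rw [htel]
      exact Finset.sum_le_sum fun i _ =>
        le_trans (le_abs_self _) (le_of_lt (hxn i))
    have hgeom : ∑ i ∈ Finset.range m, δ / 2 ^ (i + 2) < δ / 2 := by
      have heq : ∑ i ∈ Finset.range m, δ / 2 ^ (i + 2)
          = (δ / 4) * ∑ i ∈ Finset.range m, (1 / 2 : ℝ) ^ i := by
        rw [Finset.mul_sum]
        refine Finset.sum_congr rfl fun i _ => ?_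
        rw [pow_add, one_div_pow]; ring
      rw [heq, geom_sum_eq (by norm_num : (1/2:ℝ) ≠ 1)]
      have hp : (0:ℝ) < (1/2:ℝ)^m := by positivity
      have he : ((1/2:ℝ)^m - 1)/(1/2 - 1) = 2*(1 - (1/2)^m) := by ring
      rw [he]
      nlinarith
    exact lt_irrefl _ (hk.trans_lt (hle.trans_lt hgeom))
  refine le_trans (le_trans (measure_mono hsub) (measure_iUnion_le A)) ?_
  set D := ENNReal.ofReal δ with hDdef
  have hD0 : D ≠ 0 := by simp [hDdef, hδ]
  have hDt : D ≠ ⊤ := ENNReal.ofReal_ne_top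
  have hDq0 : D ^ q ≠ 0 := pow_ne_zero _ hD0
  have hDqt : D ^ q ≠ ⊤ := ENNReal.pow_ne_top hDt
  have two0 : (2:ℝ≥0∞) ≠ 0 := by norm_num
  have twot : (2:ℝ≥0∞) ≠ ⊤ := by norm_num
  have p0 : ∀ k:ℕ, ((2:ℝ≥0∞)^k) ≠ 0 := fun k => pow_ne_zero k two0
  have pt : ∀ k:ℕ, ((2:ℝ≥0∞)^k) ≠ ⊤ := fun k => ENNReal.pow_ne_top twot
  -- Step 2: termwise bound
  have hterm : ∀ n : ℕ, c (A n) ≤ (2:ℝ≥0∞) ^ ((2*q + 1 : ℤ) - j - n) * (D ^ q)⁻¹ := by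
    intro n
    have hη : (0:ℝ) < δ / 2 ^ (n + 2) := by positivity
    have h1 := h (j + n) _ hη
    refine le_trans h1 ?_
    have hof : ENNReal.ofReal (δ / 2 ^ (n + 2)) = D / 2 ^ (n + 2) := by
      rw [ENNReal.ofReal_div_of_pos (by positivity)]
      congr 1
      rw [ENNReal.ofReal_pow (by norm_num), ENNReal.ofReal_ofNat]
    rw [hof]
    set P : ℝ≥0∞ := 2 ^ ((n+2)*q) with hP
    set Q : ℝ≥0∞ := 2 ^ ((q+1)*(j+n)) with hQ
    have hMinv : ((D / 2^(n+2))^q * Q)⁻¹ = (D^q)⁻¹ * P * Q⁻¹ := by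
      rw [div_eq_mul_inv, mul_pow, ← ENNReal.inv_pow, ← pow_mul]
      rw [ENNReal.mul_inv (Or.inr (pt _)) (Or.inr (p0 _)),
        ENNReal.mul_inv (Or.inr (ENNReal.inv_ne_top.2 (p0 _)))
          (Or.inr (ENNReal.inv_ne_zero.2 (pt _))), inv_inv]
    have hpow : (2:ℝ≥0∞) * P * Q⁻¹ ≤ (2:ℝ≥0∞) ^ ((2*q + 1 : ℤ) - j - n) := by
      have e1 : (2:ℝ≥0∞) * P * Q⁻¹
          = (2:ℝ≥0∞) ^ ((1 : ℤ) + ((n+2)*q : ℕ) + (-(((q+1)*(j+n) : ℕ) : ℤ))) := by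
        rw [ENNReal.zpow_add two0 twot, ENNReal.zpow_add two0 twot,
          ENNReal.zpow_neg, zpow_one, zpow_natCast, zpow_natCast]
      rw [e1]
      refine ENNReal.zpow_le_of_le one_le_two ?_
      push_cast
      nlinarith [sq_nonneg 1, Nat.one_le_iff_ne_zero.1 hq, hj,
        mul_le_mul (le_refl (q:ℤ)) (by exact_mod_cast hj : (1:ℤ) ≤ j)
          zero_le_one (by positivity)]
    calc (2:ℝ≥0∞) / ((D / 2^(n+2))^q * Q)
        = (2 * P * Q⁻¹) * (D^q)⁻¹ := by
          rw [div_eq_mul_inv, hMinv]; ring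
      _ ≤ (2:ℝ≥0∞) ^ ((2*q + 1 : ℤ) - j - n) * (D ^ q)⁻¹ :=
          mul_le_mul_left hpow _
  refine le_trans (ENNReal.tsum_le_tsum hterm) ?_
  -- Step 3: sum the geometric series
  have hsum : ∑' n : ℕ, (2:ℝ≥0∞) ^ ((2*q + 1 : ℤ) - j - n) * (D ^ q)⁻¹
      = (2:ℝ≥0∞) ^ ((2*q + 2 : ℤ) - j) * (D ^ q)⁻¹ := by
    rw [ENNReal.tsum_mul_right]
    congr 1
    have e2 : ∀ n : ℕ, (2:ℝ≥0∞) ^ ((2*q + 1 : ℤ) - j - n)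
        = (2:ℝ≥0∞) ^ ((2*q + 1 : ℤ) - j) * (2⁻¹) ^ n := by
      intro n
      rw [sub_eq_add_neg ((2*q + 1 : ℤ) - j), ENNReal.zpow_add two0 twot,
        ENNReal.zpow_neg, zpow_natCast, ENNReal.inv_pow]
    simp_rw [e2]
    rw [ENNReal.tsum_mul_left, ENNReal.tsum_geometric, ENNReal.one_sub_inv_two, inv_inv]
    rw [show ((2*q + 2 : ℤ) - j) = ((2*q + 1 : ℤ) - j) + 1 by ring,
      ENNReal.zpow_add two0 twot, zpow_one]
  rw [hsum]
  -- Step 4: identify with the right-hand side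
  have hrhs : (4:ℝ≥0∞) ^ (q+1) / (D ^ q * 2 ^ j)
      = (2:ℝ≥0∞) ^ ((2*q + 2 : ℤ) - j) * (D ^ q)⁻¹ := by
    rw [div_eq_mul_inv, ENNReal.mul_inv (Or.inr (pt j)) (Or.inr (p0 j))]
    have h4 : (4:ℝ≥0∞) ^ (q+1) = 2 ^ (2*(q+1)) := by
      rw [pow_mul]; norm_num
    rw [h4, sub_eq_add_neg, ENNReal.zpow_add two0 twot, ENNReal.zpow_neg,
      zpow_natCast, show (2*(q:ℤ) + 2) = ((2*(q+1) : ℕ) : ℤ) by push_cast; ring,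
      zpow_natCast]
    ring
  rw [hrhs]
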